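/- Let α < 0, ε > 0 and h > 0 be fixed. For η ∈ ℝ and τ = h + iη, let μ(τ) denote the unique root of λ³ − ετλ − τ/α = 0 with Re μ(τ) < 0. Then there exist positive constants η₀ and C such that for all η with |η| ≥ η₀ one has |Re μ(τ) + √(ε/2)·|η|^{1/2}| ≤ C and | |Im μ(τ)| − √(ε/2)·|η|^{1/2} | ≤ C; i.e. μ(τ) lies within a bounded distance of √(ε/2)(−1 ± i)|η|^{1/2} (with the sign of the imaginary part opposite to that of η). -/

import Mathlib

lemma sqrt_add_le' (x y : ℝ) (hx : 0 ≤ x) (hy : 0 ≤ y) :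
    Real.sqrt (x + y) ≤ Real.sqrt x + Real.sqrt y := by
  have h1 := Real.sq_sqrt hx
  have h2 := Real.sq_sqrt hy
  have h3 := Real.sqrt_nonneg x
  have h4 := Real.sqrt_nonneg y
  have : Real.sqrt (x + y) ≤ Real.sqrt ((Real.sqrt x + Real.sqrt y) ^ 2) := by
    apply Real.sqrt_le_sqrt; nlinarith [mul_nonneg h3 h4]
  simpa [Real.sqrt_sq (by positivity : (0:ℝ) ≤ Real.sqrt x + Real.sqrt y)] using this

lemma sqrt_sub_le' (x y d : ℝ) (hy : 0 ≤ y) (hd : 0 ≤ d) (hxy : x ≤ y + d) :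
    Real.sqrt x - Real.sqrt y ≤ Real.sqrt d := by
  have h1 : Real.sqrt x ≤ Real.sqrt (y + d) := Real.sqrt_le_sqrt hxy
  have h2 := sqrt_add_le' y d hy hd
  linarith

lemma aux_div (m e c r : ℝ) (he : 0 < e) (hc : 0 < c) (hr : 0 < r) (hm : 0 ≤ m)
    (h5 : m * (e*r/2) ≤ r/c) : m ≤ 2/(c*e) := by
  rw [le_div_iff₀ (by positivity)]
  have h6 := mul_le_mul_of_nonneg_right h5 hc.le
  rw [div_mul_cancel₀ r (ne_of_gt hc)] at h6
  nlinarith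

lemma aux_prod (q m a d v : ℝ) (hq0 : 0 ≤ q) (hqm : q ≤ m) (hqa : q ≤ a) (had : a ≤ d)
    (hq2 : q^2 = v) : v ≤ m*d := by nlinarith

set_option maxHeartbeats 4000000 in
theorem stmt3 (α ε h : ℝ) (hα : α < 0) (hε : 0 < ε) (hh : 0 < h)
    (μ : ℝ → ℂ)
    (hroot : ∀ η : ℝ,
      (μ η) ^ 3 - (ε : ℂ) * ((h : ℂ) + (η : ℂ) * Complex.I) * (μ η)
        - ((h : ℂ) + (η : ℂ) * Complex.I) / (α : ℂ) = 0)
    (hneg : ∀ η : ℝ, (μ η).re < 0) :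
    ∃ η₀ C : ℝ, 0 < η₀ ∧ 0 < C ∧ ∀ η : ℝ, η₀ ≤ |η| →
      abs ((μ η).re + Real.sqrt (ε / 2) * Real.sqrt |η|) ≤ C ∧
      abs (|(μ η).im| - Real.sqrt (ε / 2) * Real.sqrt |η|) ≤ C := by
  have hα' : 0 < -α := neg_pos.2 hα
  have hαne : (α:ℂ) ≠ 0 := by exact_mod_cast (ne_of_lt hα)
  set K : ℝ := 2 / ((-α) * ε) with hKdef
  have hK0 : 0 < K := by positivity
  refine ⟨2*K^2/ε + h + 1, K + Real.sqrt (ε*h) + 1, by positivity, by positivity, ?_⟩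
  intro η hη
  have hKε : (0:ℝ) ≤ 2*K^2/ε := by positivity
  have hη1 : 1 ≤ |η| := le_trans (by linarith) hη
  have hηh : h ≤ |η| := le_trans (by linarith) hη
  set r : ℝ := Real.sqrt (h^2 + η^2) with hrdef
  have hr2 : r^2 = h^2 + η^2 := Real.sq_sqrt (by positivity)
  have hrη : |η| ≤ r := by
    have h1 : Real.sqrt (η^2) ≤ r := Real.sqrt_le_sqrt (by nlinarith)
    simpa [Real.sqrt_sq_eq_abs] using h1
  have hrh : r ≤ h + |η| := by
    have h1 : r ≤ Real.sqrt ((h + |η|)^2) :=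
      Real.sqrt_le_sqrt (by nlinarith [_root_.sq_abs η, abs_nonneg η])
    simpa [Real.sqrt_sq (by positivity : (0:ℝ) ≤ h + |η|)] using h1
  have hr0 : 0 < r := lt_of_lt_of_le (lt_of_lt_of_le one_pos hη1) hrη
  set τ : ℂ := (h : ℂ) + (η : ℂ) * Complex.I with hτdef
  have hτabs : norm τ = r := by
    rw [hτdef, Complex.norm_add_mul_I]
  set a : ℝ := Real.sqrt (ε*(r+h)/2) with hadef
  have ha2 : a^2 = ε*(r+h)/2 := Real.sq_sqrt (by positivity)
  have ha0 : 0 < a := Real.sqrt_pos.2 (by positivity)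
  set b : ℝ := ε*η/(2*a) with hbdef
  have hb' : b * (2*a) = ε*η := by
    rw [hbdef]; field_simp
  have hb2 : b^2 = ε*(r-h)/2 := by
    have hsq : (b*(2*a))^2 = (ε*η)^2 := by rw [hb']
    have h4a : (2*a)^2 = 2*(ε*(r+h)) := by rw [mul_pow, ha2]; ring
    have h1 : b^2*(2*(ε*(r+h))) = ε^2*η^2 := by linear_combination hsq - b^2 * h4a
    have h3 : (0:ℝ) < 2*(ε*(r+h)) := by positivity
    apply mul_right_cancel₀ (ne_of_gt h3)
    linear_combination h1 - ε^2 * hr2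
  set s : ℂ := (a : ℂ) + (b : ℂ) * Complex.I with hsdef
  have hre : a^2 - b^2 = ε*h := by rw [ha2, hb2]; ring
  have him : 2*(a*b) = ε*η := by linear_combination hb'
  have hs2 : s^2 = (ε:ℂ) * τ := by
    rw [hsdef, hτdef]
    have h1 : ((a:ℂ) + (b:ℂ)*Complex.I)^2
        = ((a^2 - b^2 : ℝ):ℂ) + ((2*(a*b) : ℝ):ℂ)*Complex.I := by
      push_cast
      linear_combination ((b:ℂ)^2) * Complex.I_sq
    rw [h1, hre, him]
    push_cast; ring
  have h0 : μ η ^ 3 - (ε : ℂ) * τ * (μ η) - τ / (α : ℂ) = 0 := by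
    rw [hτdef]; exact hroot η
  have heq : μ η * (μ η - s) * (μ η + s) = τ / (α : ℂ) := by
    linear_combination h0 - μ η * hs2
  have habs : norm (μ η) * norm (μ η - s) * norm (μ η + s)
      = r / (-α) := by
    have h1 := congrArg norm heq
    rwa [norm_mul, norm_mul, norm_div, hτabs, Complex.norm_real, Real.norm_eq_abs, abs_of_neg hα] at h1
  have hεr : 2*K^2 + ε*(h+1) ≤ ε*r := by
    have h1 : 2*K^2/ε + h + 1 ≤ r := le_trans hη hrη
    have h2 := mul_le_mul_of_nonneg_left h1 hε.le
    have h3 : ε*(2*K^2/ε + h + 1) = 2*K^2 + ε*(h+1) := by field_simp; ring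
    rw [h3] at h2
    exact h2
  rcases le_or_gt ((norm (μ η))^2) (ε*r/2) with hA | hB
  · -- Case A: |μ| small; contradiction with Re μ < 0
    exfalso
    have hτε : norm ((ε:ℂ)*τ) = ε*r := by
      rw [norm_mul, hτabs, Complex.norm_real, Real.norm_eq_abs, abs_of_pos hε]
    have hms2 : ε*r/2 ≤ norm ((μ η)^2 - (ε:ℂ)*τ) := by
      have h2' : norm ((ε:ℂ)*τ) - norm ((μ η)^2)
          ≤ norm ((ε:ℂ)*τ - (μ η)^2) := norm_sub_norm_le _ _
      have h2'' : norm ((ε:ℂ)*τ - (μ η)^2) = norm ((μ η)^2 - (ε:ℂ)*τ) :=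
        norm_sub_rev _ _
      rw [hτε, norm_pow, h2''] at h2'
      linarith
    have heqA : μ η * ((μ η)^2 - (ε:ℂ)*τ) = τ / (α:ℂ) := by linear_combination h0
    have habsA : norm (μ η) * norm ((μ η)^2 - (ε:ℂ)*τ) = r / (-α) := by
      have h1 := congrArg norm heqA
      rwa [norm_mul, norm_div, hτabs, Complex.norm_real, Real.norm_eq_abs, abs_of_neg hα] at h1
    have hRmul : r / (-α) * (-α) = r := div_mul_cancel₀ r (ne_of_gt hα')
    have hμle : norm (μ η) ≤ K := by
      have h5 : norm (μ η) * (ε*r/2) ≤ r/(-α) := by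
        calc norm (μ η) * (ε*r/2)
            ≤ norm (μ η) * norm ((μ η)^2 - (ε:ℂ)*τ) :=
              mul_le_mul_of_nonneg_left hms2 (norm_nonneg _)
          _ = r/(-α) := habsA
      rw [hKdef]
      exact aux_div _ _ _ _ hε hα' hr0 (norm_nonneg _) h5
    set w : ℂ := μ η + 1/((α:ℂ)*(ε:ℂ)) with hwdef
    have hεne : (ε:ℂ) ≠ 0 := by exact_mod_cast (ne_of_gt hε)
    have hτ' : (α:ℂ) * (τ/(α:ℂ)) = τ := by field_simp
    have hc : ((α:ℂ)*(ε:ℂ)) * (1/((α:ℂ)*(ε:ℂ))) = 1 := by field_simp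
    have hw : w * ((α:ℂ)*(ε:ℂ)*((μ η)^2 - (ε:ℂ)*τ)) = (μ η)^2 := by
      rw [hwdef]
      linear_combination ((α:ℂ)*(ε:ℂ)) * heqA + (ε:ℂ) * hτ' + ((μ η)^2 - (ε:ℂ)*τ) * hc
    have habsw : norm w * ((-α)*ε*norm ((μ η)^2 - (ε:ℂ)*τ))
        = (norm (μ η))^2 := by
      have h1 := congrArg norm hw
      rw [norm_mul, norm_mul, norm_mul, norm_pow, Complex.norm_real, Complex.norm_real, Real.norm_eq_abs, Real.norm_eq_abs,
        abs_of_neg hα, abs_of_pos hε] at h1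
      linarith [h1]
    set P : ℝ := (-α)*ε with hPdef
    have hP0 : 0 < P := by positivity
    have hwle : norm w * P * (ε*r/2) ≤ K^2 := by
      have h6 : norm w * P * (ε*r/2)
          ≤ norm w * P * norm ((μ η)^2 - (ε:ℂ)*τ) :=
        mul_le_mul_of_nonneg_left hms2 (by positivity)
      have h7 : norm w * P * norm ((μ η)^2 - (ε:ℂ)*τ)
          = (norm (μ η))^2 := by
        rw [← habsw, hPdef]; ring
      have h8 : (norm (μ η))^2 ≤ K^2 :=
        pow_le_pow_left₀ (norm_nonneg _) hμle 2
      exact le_trans (h6.trans_eq h7) h8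
    have hμre : (μ η).re = w.re - 1/(α*ε) := by
      have hc : (1/((α:ℂ)*(ε:ℂ))) = (((1/(α*ε)):ℝ):ℂ) := by push_cast; ring
      rw [hwdef, Complex.add_re, hc, Complex.ofReal_re]; ring
    have hinv : (1/(α*ε)) * P = -1 := by
      have hne : α*ε ≠ 0 := mul_ne_zero (ne_of_lt hα) (ne_of_gt hε)
      rw [hPdef]; field_simp; rw [div_self (ne_of_lt hα)]
    have hwre : -norm w ≤ w.re := by
      have h1 := Complex.abs_re_le_norm w
      have h2 := neg_abs_le (w.re)
      linarith
    have hμre0 := hneg η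
    rw [hμre] at hμre0
    have h8 : 1 < norm w * P := by
      have h9 : w.re < 1/(α*ε) := by linarith
      have h10 : -norm w < 1/(α*ε) := lt_of_le_of_lt hwre h9
      have h12 := mul_lt_mul_of_pos_right h10 hP0
      rw [hinv] at h12
      linarith [h12]
    have h13 : 1*(ε*r/2) < (norm w * P)*(ε*r/2) :=
      mul_lt_mul_of_pos_right h8 (by positivity)
    have h14 : 0 < ε*(h+1) := mul_pos hε (by linarith)
    linarith [hwle, hεr, h13, h14]
  · -- Case B: |μ| large, μ close to -s
    have hsq : Real.sqrt (ε*r/2) ^ 2 = ε*r/2 := Real.sq_sqrt (by positivity)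
    have hq0 : 0 ≤ Real.sqrt (ε*r/2) := Real.sqrt_nonneg _
    have hμge : Real.sqrt (ε*r/2) ≤ norm (μ η) := by
      have h1 : Real.sqrt (ε*r/2) ≤ Real.sqrt ((norm (μ η))^2) :=
        Real.sqrt_le_sqrt hB.le
      simpa [Real.sqrt_sq (norm_nonneg (μ η))] using h1
    have haq : Real.sqrt (ε*r/2) ≤ a := by
      rw [hadef]
      refine Real.sqrt_le_sqrt ?_
      have h1 := mul_le_mul_of_nonneg_left (by linarith : r ≤ r + h) hε.le
      linarith
    have ha_le : a ≤ norm (μ η - s) := by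
      have h1 : (s - μ η).re ≤ norm (s - μ η) := Complex.re_le_norm _
      have h2 : (s - μ η).re = a - (μ η).re := by rw [hsdef]; simp
      have h3 : norm (s - μ η) = norm (μ η - s) :=
        norm_sub_rev _ _
      rw [h2, h3] at h1
      linarith [hneg η]
    have hμa : ε*r/2 ≤ norm (μ η) * norm (μ η - s) :=
      aux_prod _ _ _ _ _ hq0 hμge (haq.trans_eq rfl) ha_le hsq
    have hKb : norm (μ η + s) ≤ K := by
      have h1 : (ε*r/2) * norm (μ η + s) ≤ r/(-α) := by
        calc (ε*r/2) * norm (μ η + s)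
            ≤ (norm (μ η) * norm (μ η - s)) * norm (μ η + s) :=
              mul_le_mul_of_nonneg_right hμa (norm_nonneg _)
          _ = r/(-α) := habs
      rw [hKdef]
      refine aux_div _ _ _ _ hε hα' hr0 (norm_nonneg _) ?_
      linarith [h1]
    set t : ℝ := Real.sqrt (ε/2) * Real.sqrt |η| with htdef
    have ht : t = Real.sqrt (ε*|η|/2) := by
      rw [htdef, ← Real.sqrt_mul (by positivity)]
      ring_nf
    have hsqeh : 0 ≤ Real.sqrt (ε*h) := Real.sqrt_nonneg _
    have hre1 : |(μ η).re + a| ≤ K := by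
      have h1 : (μ η + s).re = (μ η).re + a := by rw [hsdef]; simp
      have h2 := Complex.abs_re_le_norm (μ η + s)
      rw [h1] at h2
      linarith
    have hta : t ≤ a := by
      rw [ht, hadef]
      refine Real.sqrt_le_sqrt ?_
      have h1 := mul_le_mul_of_nonneg_left (by linarith [abs_nonneg η] : |η| ≤ r + h) hε.le
      linarith
    have hat : a - t ≤ Real.sqrt (ε*h) := by
      rw [ht, hadef]
      refine sqrt_sub_le' _ _ _ (by positivity) (by positivity) ?_
      have h1 := mul_le_mul_of_nonneg_left (by linarith : r + h ≤ |η| + 2*h) hε.le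
      linarith
    have hb_abs : |b| = Real.sqrt (ε*(r-h)/2) := by
      rw [← Real.sqrt_sq_eq_abs, hb2]
    have him1 : |(μ η).im + b| ≤ K := by
      have h1 : (μ η + s).im = (μ η).im + b := by rw [hsdef]; simp
      have h2 := Complex.abs_im_le_norm (μ η + s)
      rw [h1] at h2
      linarith
    have him2 : abs (|(μ η).im| - |b|) ≤ |(μ η).im + b| := by
      have h1 := abs_abs_sub_abs_le_abs_sub ((μ η).im) (-b)
      simpa [sub_neg_eq_add] using h1
    have hbt : |b| ≤ t := by
      rw [ht, hb_abs]
      refine Real.sqrt_le_sqrt ?_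
      have h1 := mul_le_mul_of_nonneg_left (by linarith : r - h ≤ |η|) hε.le
      linarith
    have htb : t - |b| ≤ Real.sqrt (ε*h) := by
      rw [ht, hb_abs]
      have hrh' : (0:ℝ) ≤ r - h := by linarith [le_trans hηh hrη]
      refine sqrt_sub_le' _ _ _
        (div_nonneg (mul_nonneg hε.le hrh') (by norm_num)) (by positivity) ?_
      have h1 := mul_le_mul_of_nonneg_left (by linarith : |η| ≤ (r - h) + 2*h) hε.le
      linarith
    constructor
    · have h1 : |(μ η).re + t| ≤ |(μ η).re + a| + |t - a| := by
        have h2 := abs_add_le ((μ η).re + a) (t - a)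
        simpa [show (μ η).re + a + (t - a) = (μ η).re + t by ring] using h2
      have h2 : |t - a| ≤ Real.sqrt (ε*h) := by
        rw [abs_sub_comm, abs_of_nonneg (by linarith)]; exact hat
      calc |(μ η).re + t| ≤ |(μ η).re + a| + |t - a| := h1
        _ ≤ K + Real.sqrt (ε*h) := by linarith
        _ ≤ K + Real.sqrt (ε*h) + 1 := by linarith
    · have h1 : abs (|(μ η).im| - t) ≤ abs (|(μ η).im| - |b|) + abs (|b| - t) := by
        have h2 := abs_add_le (|(μ η).im| - |b|) (|b| - t)
        simpa [show |(μ η).im| - |b| + (|b| - t) = |(μ η).im| - t by ring] using h2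
      have h2 : abs (|b| - t) ≤ Real.sqrt (ε*h) := by
        rw [abs_sub_comm, abs_of_nonneg (by linarith)]; exact htb
      calc abs (|(μ η).im| - t) ≤ abs (|(μ η).im| - |b|) + abs (|b| - t) := h1
        _ ≤ K + Real.sqrt (ε*h) := by linarith
        _ ≤ K + Real.sqrt (ε*h) + 1 := by linarith
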